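/- Let (𝒰,𝒱) be an (M,N)-D_ν-coherent pair of order m of positive definite functionals, with Sobolev norms s_{n,ν} = ⟨S_n, S_n⟩_{λ,ν} and connection coefficients c_{j,n,λ,ν} as in the structure relation between {P_n} and {S_n}. Then for 0 ≤ j ≤ K = max{M,N} and n ≥ 0: s_{n+m,ν}·c_{j,n+j,λ,ν} = ζ_{j,n,λ,ν} − Σ_{ℓ=1}^{K−j} c_{ℓ,n,λ,ν}·c_{j+ℓ,n+j,λ,ν}·s_{n−ℓ+m,ν}, where ζ_{j,n,λ,ν} = Σ_{i=j}^{M} ã_{i,n+j} ã_{i−j,n} ⟨𝒰, P_{n+j−i+m}²⟩ + λ Σ_{i=j}^{N} b̃_{i,n+j} b̃_{i−j,n} ⟨𝒱, Q_{n+j−i}²⟩, with ã_{i,n} = (η_{n,m,ν}/η_{n−i,m,ν})a_{i,n} and b̃_{i,n} = η_{n,m,ν} b_{i,n}, c_{0,n,λ,ν} = 1, and a_{0,n} = b_{0,n} = 1. -/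

import Mathlib

open Polynomial Finset

/-- The forward difference operator (D_ω p)(x) = (p(x+ω)-p(x))/ω. -/
noncomputable def Dw (ω : ℝ) : Polynomial ℝ →ₗ[ℝ] Polynomial ℝ where
  toFun p := C ω⁻¹ * (p.comp (X + C ω) - p)
  map_add' p r := by
    ext n
    simp [add_comp, coeff_C_mul, coeff_sub, coeff_add]
    ring
  map_smul' c p := by
    ext n
    simp [smul_comp, coeff_C_mul, coeff_smul, coeff_sub, smul_eq_mul]
    ring

/-- The q-derivative operator (D_q p)(x) = (p(qx)-p(x))/((q-1)x). -/
noncomputable def Dq (q : ℝ) : Polynomial ℝ →ₗ[ℝ] Polynomial ℝ where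
  toFun p := C (q-1)⁻¹ * (p.comp (C q * X) - p).divX
  map_add' p r := by
    ext n
    simp [add_comp, coeff_divX, coeff_C_mul, coeff_sub, coeff_add]
    ring
  map_smul' c p := by
    ext n
    simp [smul_comp, coeff_divX, coeff_C_mul, coeff_smul, coeff_sub, smul_eq_mul]
    ring

/-- η_{n,m,ω} = (n+1)_m. -/
noncomputable def etaW (m n : ℕ) : ℝ := ∏ k ∈ Finset.range m, ((n : ℝ) + 1 + k)

/-- η_{n,m,q} = (q^{n+1};q)_m/(1-q)^m. -/
noncomputable def etaQ (q : ℝ) (m n : ℕ) : ℝ :=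
  (∏ k ∈ Finset.range m, (1 - q ^ (n + 1 + k))) / (1 - q) ^ m

/-- `D` is the difference operator D_ν, with `η n = η_{n,m,ν}` its order-`m` normalization
constants, for ν = ω ∈ ℝ∖{0} or ν = q ∈ ℝ∖{0,±1}. -/
def NuData (D : Polynomial ℝ →ₗ[ℝ] Polynomial ℝ) (m : ℕ) (η : ℕ → ℝ) : Prop :=
  (∃ ω : ℝ, ω ≠ 0 ∧ D = Dw ω ∧ η = etaW m) ∨
  (∃ q : ℝ, q ≠ 0 ∧ q ≠ 1 ∧ q ≠ -1 ∧ D = Dq q ∧ η = etaQ q m)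

/-- A positive definite linear functional. -/
def PosDef (U : Polynomial ℝ →ₗ[ℝ] ℝ) : Prop :=
  ∀ p : Polynomial ℝ, p ≠ 0 → 0 < U (p * p)

/-- `P` is the sequence of monic orthogonal polynomials of the functional `U`. -/
def IsMOPS (U : Polynomial ℝ →ₗ[ℝ] ℝ) (P : ℕ → Polynomial ℝ) : Prop :=
  (∀ n, (P n).Monic) ∧ (∀ n, (P n).natDegree = n) ∧ ∀ n k, n ≠ k → U (P n * P k) = 0

/-- The Sobolev bilinear form ⟨p,r⟩_{λ,ν} = ⟨𝒰, pr⟩ + λ⟨𝒱, (D_ν^m p)(D_ν^m r)⟩. -/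
noncomputable def sob (U V : Polynomial ℝ →ₗ[ℝ] ℝ) (lam : ℝ)
    (D : Polynomial ℝ →ₗ[ℝ] Polynomial ℝ) (m : ℕ) (p r : Polynomial ℝ) : ℝ :=
  U (p * r) + lam * V (((D ^ m) p) * ((D ^ m) r))

/-- `S` is the monic OPS of the Sobolev inner product. -/
def IsSobMOPS (U V : Polynomial ℝ →ₗ[ℝ] ℝ) (lam : ℝ)
    (D : Polynomial ℝ →ₗ[ℝ] Polynomial ℝ) (m : ℕ) (S : ℕ → Polynomial ℝ) : Prop :=
  (∀ n, (S n).Monic) ∧ (∀ n, (S n).natDegree = n) ∧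
    ∀ n k, n ≠ k → sob U V lam D m (S n) (S k) = 0

/-- The monic normalized m-th difference derivatives Pₙ^{[m,ν]} = D_ν^m P_{n+m}/η_{n,m,ν}. -/
noncomputable def Pm (D : Polynomial ℝ →ₗ[ℝ] Polynomial ℝ) (η : ℕ → ℝ) (m : ℕ)
    (P : ℕ → Polynomial ℝ) (n : ℕ) : Polynomial ℝ :=
  C (η n)⁻¹ * ((D ^ m) (P (n + m)))

/-- (𝒰,𝒱) is an (M,N)-D_ν-coherent pair of order m, witnessed by the MOPS `P`, `Q` and
coefficients `a`, `b` (with the conventions a₀ₙ = b₀ₙ = 1, aᵢₙ = bᵢₙ = 0 for i > n). -/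
def Coherent (D : Polynomial ℝ →ₗ[ℝ] Polynomial ℝ) (η : ℕ → ℝ) (m : ℕ)
    (P Q : ℕ → Polynomial ℝ) (M N : ℕ) (a b : ℕ → ℕ → ℝ) : Prop :=
  (∀ n, a 0 n = 1) ∧ (∀ n, b 0 n = 1) ∧
  (∀ i n, n < i → a i n = 0) ∧ (∀ i n, n < i → b i n = 0) ∧
  (∀ n, M ≤ n → a M n ≠ 0) ∧ (∀ n, N ≤ n → b N n ≠ 0) ∧
  ∀ n, ∑ i ∈ Finset.range (M + 1), a i n • Pm D η m P (n - i)
      = ∑ i ∈ Finset.range (N + 1), b i n • Q (n - i)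


private lemma eta_ne_zero {D : Polynomial ℝ →ₗ[ℝ] Polynomial ℝ} {m : ℕ} {η : ℕ → ℝ}
    (hν : NuData D m η) : ∀ n, η n ≠ 0 := by
  intro n
  rcases hν with ⟨ω, hω, hD, hη⟩ | ⟨q, hq0, hq1, hqn, hD, hη⟩
  · subst hη
    unfold etaW
    have : 0 < ∏ k ∈ Finset.range m, ((n : ℝ) + 1 + k) := by
      apply Finset.prod_pos
      intro k _
      positivity
    exact ne_of_gt this
  · subst hη
    unfold etaQ
    apply div_ne_zero
    · apply Finset.prod_ne_zero_iff.mpr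
      intro k _
      have hqe : q ^ (n + 1 + k) ≠ 1 := by
        intro h
        have habs : |q| ^ (n + 1 + k) = 1 := by rw [← abs_pow, h, abs_one]
        have h1 : |q| = 1 := by
          rcases lt_trichotomy |q| 1 with h1 | h1 | h1
          · exact absurd habs (by have := pow_lt_one₀ (abs_nonneg q) h1 (show n+1+k ≠ 0 by omega); linarith)
          · exact h1
          · exact absurd habs (by have := one_lt_pow₀ h1 (show n+1+k ≠ 0 by omega); linarith)
        rcases (abs_eq (by norm_num : (0:ℝ) ≤ 1)).mp h1 with h2 | h2
        · exact hq1 h2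
        · exact hqn h2
      exact sub_ne_zero.mpr (Ne.symm hqe)
    · exact pow_ne_zero _ (sub_ne_zero.mpr (Ne.symm hq1))

private lemma collapse18 (n j A : ℕ) (f g : ℕ → ℝ) (β : ℕ → ℕ → ℝ)
    (hf : ∀ i, n + j < i → f i = 0) (hg : ∀ i, n < i → g i = 0)
    (hβ : ∀ x y, x ≠ y → β x y = 0) :
    ∑ i ∈ Finset.range (A + 1), ∑ i' ∈ Finset.range (A + 1),
        f i * g i' * β (n + j - i) (n - i')
      = ∑ i ∈ Finset.Icc j A, f i * g (i - j) * β (n + j - i) (n + j - i) := by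
  have hterm : ∀ i i', i ≠ i' + j → f i * g i' * β (n + j - i) (n - i') = 0 := by
    intro i i' hne
    by_cases h1 : n + j < i
    · simp [hf i h1]
    · by_cases h2 : n < i'
      · simp [hg i' h2]
      · have hxy : n + j - i ≠ n - i' := by omega
        simp [hβ _ _ hxy]
  have hinner : ∀ i ∈ Finset.range (A + 1),
      (∑ i' ∈ Finset.range (A + 1), f i * g i' * β (n + j - i) (n - i'))
        = if j ≤ i then f i * g (i - j) * β (n + j - i) (n + j - i) else 0 := by
    intro i hi
    simp only [Finset.mem_range] at hi
    by_cases hji : j ≤ i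
    · rw [if_pos hji]
      rw [Finset.sum_eq_single (i - j)]
      · by_cases h1 : n + j < i
        · simp [hf i h1]
        · have h2 : n - (i - j) = n + j - i := by omega
          rw [h2]
      · intro i' _ hne
        exact hterm i i' (by omega)
      · intro hmem
        exact absurd (Finset.mem_range.mpr (by omega)) hmem
    · rw [if_neg hji]
      apply Finset.sum_eq_zero
      intro i' _
      exact hterm i i' (by omega)
  rw [Finset.sum_congr rfl hinner, ← Finset.sum_filter]
  apply Finset.sum_congr _ (fun _ _ => rfl)
  ext x
  simp only [Finset.mem_filter, Finset.mem_range, Finset.mem_Icc]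
  omega

/-- the recursion
s_{n+m}·c_{j,n+j} = ζ_{j,n} − Σ_{ℓ=1}^{K−j} c_{ℓ,n}·c_{j+ℓ,n+j}·s_{n−ℓ+m}
for 0 ≤ j ≤ K = max{M,N} and n ≥ 0, where s_{n} = ⟨Sₙ,Sₙ⟩_{λ,ν},
ζ_{j,n} = Σ_{i=j}^M ã_{i,n+j} ã_{i−j,n} ⟨𝒰,P²_{n+j−i+m}⟩
        + λ Σ_{i=j}^N b̃_{i,n+j} b̃_{i−j,n} ⟨𝒱,Q²_{n+j−i}⟩,
ã_{i,n} = (η_n/η_{n−i}) a_{i,n} and b̃_{i,n} = η_n b_{i,n}. -/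
theorem stmt18 (D : Polynomial ℝ →ₗ[ℝ] Polynomial ℝ) (η : ℕ → ℝ) (m : ℕ)
    (hν : NuData D m η) (hm : 1 ≤ m) (lam : ℝ) (hlam : 0 < lam)
    (U V : Polynomial ℝ →ₗ[ℝ] ℝ) (hU : PosDef U) (hV : PosDef V)
    (P Q S : ℕ → Polynomial ℝ) (hP : IsMOPS U P) (hQ : IsMOPS V Q)
    (hS : IsSobMOPS U V lam D m S)
    (M N : ℕ) (a b : ℕ → ℕ → ℝ) (hcoh : Coherent D η m P Q M N a b)
    (c : ℕ → ℕ → ℝ) (hc0 : ∀ n : ℕ, c 0 n = 1) (hcv : ∀ j n : ℕ, n < j → c j n = 0)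
    (hrel : ∀ n : ℕ,
      P (n + m) + ∑ i ∈ Finset.Icc 1 M, (η n / η (n - i) * a i n) • P (n - i + m)
        = S (n + m) + ∑ j ∈ Finset.Icc 1 (max M N), c j n • S (n - j + m)) :
    ∀ j ≤ max M N, ∀ n : ℕ,
      sob U V lam D m (S (n + m)) (S (n + m)) * c j (n + j)
        = (∑ i ∈ Finset.Icc j M,
              (η (n + j) / η (n + j - i) * a i (n + j)) *
              (η n / η (n - (i - j)) * a (i - j) n) *
              U (P (n + j - i + m) * P (n + j - i + m))
            + lam * ∑ i ∈ Finset.Icc j N,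
              (η (n + j) * b i (n + j)) * (η n * b (i - j) n) *
              V (Q (n + j - i) * Q (n + j - i)))
          - ∑ l ∈ Finset.Icc 1 (max M N - j),
              c l n * c (j + l) (n + j) *
              sob U V lam D m (S (n - l + m)) (S (n - l + m)) := by
  classical
  obtain ⟨ha0, hb0, hav, hbv, -, -, hcohrel⟩ := hcoh
  have hη := eta_ne_zero hν
  intro j hj n
  have hIcoIcc : ∀ a b : ℕ, Finset.Ico a (b + 1) = Finset.Icc a b := by
    intro a b; ext x; simp [Nat.lt_succ_iff]
  -- bilinear expansion of a linear functional over two sums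
  have hWexp : ∀ (W : Polynomial ℝ →ₗ[ℝ] ℝ) (A : ℕ) (f g : ℕ → ℝ) (p q : ℕ → Polynomial ℝ),
      W ((∑ i ∈ Finset.range (A + 1), f i • p i) * (∑ i' ∈ Finset.range (A + 1), g i' • q i'))
        = ∑ i ∈ Finset.range (A + 1), ∑ i' ∈ Finset.range (A + 1),
            f i * g i' * W (p i * q i') := by
    intro W A f g p q
    rw [Finset.sum_mul_sum, map_sum]
    refine Finset.sum_congr rfl fun i _ => ?_
    rw [map_sum]
    refine Finset.sum_congr rfl fun i' _ => ?_
    rw [smul_mul_smul_comm, map_smul, smul_eq_mul]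
  have hDsum : ∀ (A : ℕ) (f : ℕ → ℝ) (p : ℕ → Polynomial ℝ),
      (D ^ m) (∑ i ∈ Finset.range (A + 1), f i • p i)
        = ∑ i ∈ Finset.range (A + 1), f i • (D ^ m) (p i) := by
    intro A f p; simp [map_sum, map_smul]
  have hsobexp : ∀ (A : ℕ) (f g : ℕ → ℝ) (p q : ℕ → Polynomial ℝ),
      sob U V lam D m (∑ i ∈ Finset.range (A + 1), f i • p i)
          (∑ i' ∈ Finset.range (A + 1), g i' • q i')
        = ∑ i ∈ Finset.range (A + 1), ∑ i' ∈ Finset.range (A + 1),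
            f i * g i' * sob U V lam D m (p i) (q i') := by
    intro A f g p q
    unfold sob
    rw [hDsum, hDsum, hWexp U, hWexp V, Finset.mul_sum, ← Finset.sum_add_distrib]
    refine Finset.sum_congr rfl fun i _ => ?_
    rw [Finset.mul_sum, ← Finset.sum_add_distrib]
    refine Finset.sum_congr rfl fun i' _ => ?_
    ring
  set R : ℕ → Polynomial ℝ :=
    fun k => ∑ i ∈ Finset.range (M + 1), (η k / η (k - i) * a i k) • P (k - i + m) with hRdef
  -- R in terms of the Sobolev OPS
  have hRS : ∀ k, R k = ∑ t ∈ Finset.range (max M N + 1), c t k • S (k - t + m) := by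
    intro k
    simp only [hRdef]
    rw [Finset.range_eq_Ico,
        Finset.sum_eq_sum_Ico_succ_bot (Nat.succ_pos M),
        Finset.range_eq_Ico, Finset.sum_eq_sum_Ico_succ_bot (Nat.succ_pos (max M N)),
        hIcoIcc 1 M, hIcoIcc 1 (max M N)]
    have h0 : η k / η (k - 0) * a 0 k = 1 := by
      rw [Nat.sub_zero, ha0, mul_one, div_self (hη k)]
    rw [h0, hc0, one_smul, one_smul]
    simpa using hrel k
  -- the m-th derivative of R via coherence
  have hDR : ∀ k, (D ^ m) (R k) = ∑ i ∈ Finset.range (N + 1), (η k * b i k) • Q (k - i) := by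
    intro k
    have step1 : (D ^ m) (R k)
        = ∑ i ∈ Finset.range (M + 1), (η k / η (k - i) * a i k) • (D ^ m) (P (k - i + m)) := by
      simp only [hRdef]
      exact hDsum M _ _
    have step2 : ∀ i, (η k / η (k - i) * a i k) • (D ^ m) (P (k - i + m))
        = η k • (a i k • Pm D η m P (k - i)) := by
      intro i
      simp only [Pm, ← Polynomial.smul_eq_C_mul, smul_smul]
      congr 1
      rw [div_eq_mul_inv]; ring
    rw [step1, Finset.sum_congr rfl (fun i _ => step2 i), ← Finset.smul_sum, hcohrel k,
        Finset.smul_sum]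
    exact Finset.sum_congr rfl fun i _ => smul_smul _ _ _
  -- orthogonality
  have hβP : ∀ x y : ℕ, x ≠ y → U (P (x + m) * P (y + m)) = 0 :=
    fun x y hxy => hP.2.2 _ _ (by omega)
  have hβQ : ∀ x y : ℕ, x ≠ y → V (Q x * Q y) = 0 := fun x y hxy => hQ.2.2 _ _ hxy
  have hβS : ∀ x y : ℕ, x ≠ y → sob U V lam D m (S (x + m)) (S (y + m)) = 0 :=
    fun x y hxy => hS.2.2 _ _ (by omega)
  -- the U part
  have eU : U (R (n + j) * R n)
      = ∑ i ∈ Finset.Icc j M,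
          (η (n + j) / η (n + j - i) * a i (n + j)) *
          (η n / η (n - (i - j)) * a (i - j) n) *
          U (P (n + j - i + m) * P (n + j - i + m)) := by
    simp only [hRdef]
    exact (hWexp U M _ _ _ _).trans
      (collapse18 n j M (fun i => η (n + j) / η (n + j - i) * a i (n + j))
        (fun i => η n / η (n - i) * a i n)
        (fun x y => U (P (x + m) * P (y + m)))
        (fun i hi => by simp [hav i (n + j) hi])
        (fun i hi => by simp [hav i n hi]) hβP)
  -- the V part
  have eV : V ((D ^ m) (R (n + j)) * (D ^ m) (R n))
      = ∑ i ∈ Finset.Icc j N,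
          (η (n + j) * b i (n + j)) * (η n * b (i - j) n) *
          V (Q (n + j - i) * Q (n + j - i)) := by
    rw [hDR (n + j), hDR n]
    exact (hWexp V N _ _ _ _).trans
      (collapse18 n j N (fun i => η (n + j) * b i (n + j)) (fun i => η n * b i n)
        (fun x y => V (Q x * Q y))
        (fun i hi => by simp [hbv i (n + j) hi])
        (fun i hi => by simp [hbv i n hi]) hβQ)
  -- the S part
  have eS : sob U V lam D m (R (n + j)) (R n)
      = ∑ t ∈ Finset.Icc j (max M N),
          c t (n + j) * c (t - j) n *
          sob U V lam D m (S (n + j - t + m)) (S (n + j - t + m)) := by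
    rw [hRS (n + j), hRS n]
    exact (hsobexp (max M N) _ _ _ _).trans
      (collapse18 n j (max M N) (fun t => c t (n + j)) (fun t => c t n)
        (fun x y => sob U V lam D m (S (x + m)) (S (y + m)))
        (fun i hi => hcv i (n + j) hi) (fun i hi => hcv i n hi) hβS)
  -- split off the diagonal term and reindex
  have e4 : ∑ t ∈ Finset.Icc j (max M N),
        c t (n + j) * c (t - j) n *
        sob U V lam D m (S (n + j - t + m)) (S (n + j - t + m))
      = sob U V lam D m (S (n + m)) (S (n + m)) * c j (n + j)
        + ∑ l ∈ Finset.Icc 1 (max M N - j),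
            c l n * c (j + l) (n + j) *
            sob U V lam D m (S (n - l + m)) (S (n - l + m)) := by
    rw [← hIcoIcc j (max M N), Finset.sum_eq_sum_Ico_succ_bot (by omega : j < max M N + 1)]
    congr 1
    · have h1 : j - j = 0 := Nat.sub_self j
      have h2 : n + j - j = n := by omega
      rw [h1, h2, hc0, mul_one, mul_comm]
    · apply Finset.sum_nbij' (fun t => t - j) (fun l => j + l)
      · intro t ht
        simp only [Finset.mem_Ico] at ht
        simp only [Finset.mem_Icc]
        omega
      · intro l hl
        simp only [Finset.mem_Icc] at hl
        simp only [Finset.mem_Ico]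
        omega
      · intro t ht; simp only [Finset.mem_Ico] at ht; omega
      · intro l hl; simp only [Finset.mem_Icc] at hl; omega
      · intro t ht
        simp only [Finset.mem_Ico] at ht
        have h1 : j + (t - j) = t := by omega
        have h2 : n - (t - j) = n + j - t := by omega
        rw [h1, h2]
        ring
  have hmain : (∑ i ∈ Finset.Icc j M,
        (η (n + j) / η (n + j - i) * a i (n + j)) *
        (η n / η (n - (i - j)) * a (i - j) n) *
        U (P (n + j - i + m) * P (n + j - i + m)))
      + lam * ∑ i ∈ Finset.Icc j N,
          (η (n + j) * b i (n + j)) * (η n * b (i - j) n) *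
          V (Q (n + j - i) * Q (n + j - i))
      = sob U V lam D m (S (n + m)) (S (n + m)) * c j (n + j)
        + ∑ l ∈ Finset.Icc 1 (max M N - j),
            c l n * c (j + l) (n + j) *
            sob U V lam D m (S (n - l + m)) (S (n - l + m)) := by
    rw [← eU, ← eV, ← e4, ← eS]
    rfl
  linarith [hmain]
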